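/- arXiv:1905.13554 — 3 statements merged into one kernel-verified Lean document; each statement's English description precedes it below -/
import Mathlib

section
/- Let Ψ: U × V → ℝ, d: V × V → ℝ≥0, Σ ⊆ U, Γ ⊆ V, and Ψ_ρ(u,v,ṽ) = Ψ(u,v) + ρ d(v,ṽ). Let (ρᵏ) be a sequence of positive reals with ρᵏ → ∞, ε ≥ 0, and let (uᵏ, vᵏ, ṽᵏ) ∈ Σ × V × Γ be a sequence such that for every k: Ψ(u,v) + ρᵏ d(v, ṽᵏ) ≥ Ψ(uᵏ, vᵏ) + ρᵏ d(vᵏ, ṽᵏ) − ε for all (u,v) ∈ Σ × V, and Ψ(uᵏ, vᵏ) + ρᵏ d(vᵏ, ṽ) ≥ Ψ(uᵏ, vᵏ) + ρᵏ d(vᵏ, ṽᵏ) − ε for all ṽ ∈ Γ. Assume d is continuous, Ψ is bounded on the set of iterates together with any fixed comparison point, and (vᵏ, ṽᵏ) → (v*, ṽ*) in a topology in which d is continuous. Then (v*, ṽ*) is a partial minimum of the feasibility measure χ(v, ṽ) = d(v, ṽ): d(v, ṽ*) ≥ d(v*, ṽ*) for all v ∈ V such that (u, v) ∈ Σ ×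 V for some u, and d(v*, ṽ) ≥ d(v*, ṽ*) for all ṽ ∈ Γ. -/
open Filter

/-- Theorem 4: a limit of penalty-ε-ADM iterates with ρᵏ → ∞ is a partial
minimum of the feasibility measure χ(v, ṽ) = d(v, ṽ). -/
theorem stmt_4 {U V : Type*} [MetricSpace V] (Ψ : U → V → ℝ)
    (Sg : Set U) (Γ : Set V)
    (ρ : ℕ → ℝ) (hρpos : ∀ k, 0 < ρ k) (hρ : Tendsto ρ atTop atTop)
    (ε : ℝ) (hε : 0 ≤ ε)
    (uu : ℕ → U) (vv : ℕ → V) (tv : ℕ → V)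
    (hmemu : ∀ k, uu k ∈ Sg) (hmemt : ∀ k, tv k ∈ Γ)
    (h1 : ∀ k, ∀ u ∈ Sg, ∀ v : V,
      Ψ u v + ρ k * dist v (tv k) ≥ Ψ (uu k) (vv k) + ρ k * dist (vv k) (tv k) - ε)
    (h2 : ∀ k, ∀ vtil ∈ Γ,
      Ψ (uu k) (vv k) + ρ k * dist (vv k) vtil ≥
        Ψ (uu k) (vv k) + ρ k * dist (vv k) (tv k) - ε)
    (hbound : ∃ C : ℝ, ∀ k, |Ψ (uu k) (vv k)| ≤ C)
    (vstar tvstar : V)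
    (hvconv : Tendsto vv atTop (nhds vstar)) (htconv : Tendsto tv atTop (nhds tvstar)) :
    (∀ v : V, (∃ u, u ∈ Sg) → dist v tvstar ≥ dist vstar tvstar) ∧
    (∀ vtil ∈ Γ, dist vstar vtil ≥ dist vstar tvstar) := by
  obtain ⟨C, hC⟩ := hbound
  have hinv : Tendsto (fun k => (ρ k)⁻¹) atTop (nhds 0) := hρ.inv_tendsto_atTop
  constructor
  · rintro v ⟨u, hu⟩
    -- g k := -(C + |Ψ u v| + ε) * (ρ k)⁻¹ tends to 0
    have hg : Tendsto (fun k => -(C + |Ψ u v| + ε) * (ρ k)⁻¹) atTop (nhds 0) := by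
      simpa using hinv.const_mul (-(C + |Ψ u v| + ε))
    have hf : Tendsto (fun k => dist v (tv k) - dist (vv k) (tv k)) atTop
        (nhds (dist v tvstar - dist vstar tvstar)) :=
      ((tendsto_const_nhds.dist htconv).sub (hvconv.dist htconv))
    have key : 0 ≤ dist v tvstar - dist vstar tvstar := by
      have := le_of_tendsto_of_tendsto' hg hf (fun k => by
        have h := h1 k u hu v
        have hb := hC k
        have hρk := hρpos k
        have h1' : -(C + |Ψ u v| + ε) ≤ ρ k * (dist v (tv k) - dist (vv k) (tv k)) := by
          have := abs_le.mp hb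
          nlinarith [abs_nonneg (Ψ u v), le_abs_self (Ψ u v), neg_abs_le (Ψ u v)]
        rw [show -(C + |Ψ u v| + ε) * (ρ k)⁻¹
            = -(C + |Ψ u v| + ε) / ρ k by rw [div_eq_mul_inv]]
        exact (div_le_iff₀' hρk).mpr h1')
      linarith
    linarith
  · intro vtil hvtil
    have hg : Tendsto (fun k => -ε * (ρ k)⁻¹) atTop (nhds 0) := by
      simpa using hinv.const_mul (-ε)
    have hf : Tendsto (fun k => dist (vv k) vtil - dist (vv k) (tv k)) atTop
        (nhds (dist vstar vtil - dist vstar tvstar)) :=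
      ((hvconv.dist tendsto_const_nhds).sub (hvconv.dist htconv))
    have key : 0 ≤ dist vstar vtil - dist vstar tvstar := by
      have := le_of_tendsto_of_tendsto' hg hf (fun k => by
        have h := h2 k vtil hvtil
        have hρk := hρpos k
        have h2' : -ε ≤ ρ k * (dist (vv k) vtil - dist (vv k) (tv k)) := by nlinarith
        rw [show -ε * (ρ k)⁻¹ = -ε / ρ k by ring]
        exact (div_le_iff₀' hρk).mpr h2')
      linarith
    linarith
end

section
/- Let w: [0,T] → [0,1]^{M̃} be measurable with Σᵢ wᵢ(t) = 1 almost everywhere, and let wⁿ: [0,T] → {0,1}^{M̃} with Σᵢ wⁿᵢ(t) = 1 be binary approximations satisfying the integral-deviation bound sup_{t∈[0,T]} ‖∫₀ᵗ (w(s) − wⁿ(s)) ds‖_∞ ≤ δₙ with δₙ → 0. Let g: [0,T] → ℝ^{M̃} be continuously differentiable and define z(t) = ∫₀ᵗ Σᵢ wᵢ(s) gᵢ(s) ds and zₙ(t) = ∫₀ᵗ Σᵢ wⁿᵢ(s) gᵢ(s) ds. Then ‖z − zₙ‖_{C([0,T])} ≤ δₙ·(‖g‖_∞ + T·‖g'‖_∞)·M̃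 → 0 as n → ∞. -/
open Filter MeasureTheory intervalIntegral Set

private lemma bddIntOn {f : ℝ → ℝ} {a b C : ℝ} (hf : Measurable f)
    (hC : ∀ x ∈ Set.Ioc a b, |f x| ≤ C) : IntegrableOn f (Set.Ioc a b) volume := by
  apply Measure.integrableOn_of_bounded measure_Ioc_lt_top.ne hf.aestronglyMeasurable (M := C)
  filter_upwards [ae_restrict_mem measurableSet_Ioc] with x hx
  simpa using hC x hx

private lemma fubini_swap {t : ℝ} (ht : 0 ≤ t) {d φ : ℝ → ℝ} (hd : Measurable d)
    {C : ℝ} (hdb : ∀ s ∈ Set.Ioc (0:ℝ) t, |d s| ≤ C) (hφ : Continuous φ) :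
    ∫ s in (0:ℝ)..t, d s * (∫ r in s..t, φ r) =
      ∫ r in (0:ℝ)..t, (∫ s in (0:ℝ)..r, d s) * φ r := by
  obtain ⟨Cφ, hCφ⟩ := (isCompact_Icc (a := (0:ℝ)) (b := t)).exists_bound_of_continuousOn
    hφ.continuousOn
  have hFmeas : Measurable (fun p : ℝ × ℝ => if p.1 ≤ p.2 then d p.1 * φ p.2 else 0) :=
    Measurable.ite (measurableSet_le measurable_fst measurable_snd)
      ((hd.comp measurable_fst).mul (hφ.measurable.comp measurable_snd)) measurable_const
  have hint : Integrable (Function.uncurry fun s r => if s ≤ r then d s * φ r else 0)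
      ((volume.restrict (Set.Ioc (0:ℝ) t)).prod (volume.restrict (Set.Ioc (0:ℝ) t))) := by
    apply Integrable.mono' (g := fun _ => |C| * |Cφ|) (integrable_const _)
      hFmeas.aestronglyMeasurable
    have hmem : ∀ᵐ p ∂((volume.restrict (Set.Ioc (0:ℝ) t)).prod
        (volume.restrict (Set.Ioc (0:ℝ) t))),
        p ∈ Set.Ioc (0:ℝ) t ×ˢ Set.Ioc (0:ℝ) t := by
      rw [Measure.prod_restrict]
      exact ae_restrict_mem (measurableSet_Ioc.prod measurableSet_Ioc)
    filter_upwards [hmem] with p hp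
    rcases hp with ⟨h1, h2⟩
    show ‖Function.uncurry (fun s r => if s ≤ r then d s * φ r else 0) p‖ ≤ _
    rw [Function.uncurry]
    split_ifs with h
    · rw [Real.norm_eq_abs, abs_mul]
      exact mul_le_mul ((hdb _ h1).trans (le_abs_self C))
        ((hCφ _ (Set.Ioc_subset_Icc_self h2)).trans (le_abs_self Cφ)) (abs_nonneg _)
        (abs_nonneg _)
    · simp [mul_nonneg (abs_nonneg C) (abs_nonneg Cφ)]
  have swap := MeasureTheory.integral_integral_swap hint
  rw [intervalIntegral.integral_of_le ht, intervalIntegral.integral_of_le ht]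
  calc ∫ s in Set.Ioc (0:ℝ) t, d s * ∫ r in s..t, φ r
      = ∫ s in Set.Ioc (0:ℝ) t, ∫ r in Set.Ioc (0:ℝ) t,
          (if s ≤ r then d s * φ r else 0) := by
        apply setIntegral_congr_fun measurableSet_Ioc
        intro s hs
        have h1 : ∀ r, (if s ≤ r then d s * φ r else 0)
            = (Set.Ici s).indicator (fun r => d s * φ r) r := by
          intro r; simp [Set.indicator_apply]
        simp_rw [h1]
        rw [setIntegral_indicator measurableSet_Ici]
        have hset : Set.Ioc (0:ℝ) t ∩ Set.Ici s = Set.Icc s t := by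
          ext r
          simp only [Set.mem_inter_iff, Set.mem_Ioc, Set.mem_Ici, Set.mem_Icc]
          exact ⟨fun h => ⟨h.2, h.1.2⟩, fun h => ⟨⟨lt_of_lt_of_le hs.1 h.1, h.2⟩, h.1⟩⟩
        rw [hset, MeasureTheory.integral_Icc_eq_integral_Ioc, MeasureTheory.integral_const_mul,
          ← intervalIntegral.integral_of_le hs.2]
    _ = ∫ r in Set.Ioc (0:ℝ) t, ∫ s in Set.Ioc (0:ℝ) t,
          (if s ≤ r then d s * φ r else 0) := swap
    _ = ∫ r in Set.Ioc (0:ℝ) t, (∫ s in (0:ℝ)..r, d s) * φ r := by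
        apply setIntegral_congr_fun measurableSet_Ioc
        intro r hr
        have h1 : ∀ s, (if s ≤ r then d s * φ r else 0)
            = (Set.Iic r).indicator (fun s => d s * φ r) s := by
          intro s; simp [Set.indicator_apply]
        simp_rw [h1]
        rw [setIntegral_indicator measurableSet_Iic]
        have hset : Set.Ioc (0:ℝ) t ∩ Set.Iic r = Set.Ioc 0 r := by
          ext s
          simp only [Set.mem_inter_iff, Set.mem_Ioc, Set.mem_Iic]
          exact ⟨fun h => ⟨h.1.1, h.2⟩, fun h => ⟨⟨h.1, h.2.trans hr.2⟩, h.2⟩⟩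
        rw [hset, MeasureTheory.integral_mul_const, ← intervalIntegral.integral_of_le hr.1.le]

set_option maxHeartbeats 1000000

/-- sum-up rounding convergence estimate: if the accumulated integrals of
binary multipliers wⁿ approximate those of relaxed multipliers w uniformly with rate δₙ → 0,
then the corresponding integrated states converge uniformly with the explicit bound
δₙ (‖g‖_∞ + T ‖g'‖_∞) M̃. -/
theorem stmt_17 (T : ℝ) (hT : 0 < T) (Mt : ℕ) (hMt : 0 < Mt)
    (w : ℝ → Fin Mt → ℝ) (hw_meas : Measurable w)
    (hw_mem : ∀ t ∈ Set.Icc (0 : ℝ) T, ∀ i, w t i ∈ Set.Icc (0 : ℝ) 1)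
    (hw_sum : ∀ᵐ t ∂(volume.restrict (Set.Icc (0 : ℝ) T)), ∑ i, w t i = 1)
    (wn : ℕ → ℝ → Fin Mt → ℝ) (hwn_meas : ∀ n, Measurable (wn n))
    (hwn_mem : ∀ n, ∀ t ∈ Set.Icc (0 : ℝ) T, ∀ i, wn n t i ∈ ({0, 1} : Set ℝ))
    (hwn_sum : ∀ n, ∀ t ∈ Set.Icc (0 : ℝ) T, ∑ i, wn n t i = 1)
    (δ : ℕ → ℝ) (hδ_nonneg : ∀ n, 0 ≤ δ n) (hδ : Tendsto δ atTop (nhds 0))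
    (hdev : ∀ n, ∀ t ∈ Set.Icc (0 : ℝ) T,
      ‖∫ s in (0 : ℝ)..t, (w s - wn n s)‖ ≤ δ n)
    (g : ℝ → Fin Mt → ℝ) (hg : ContDiff ℝ 1 g)
    (Cg Cg' : ℝ)
    (hCg : ∀ t ∈ Set.Icc (0 : ℝ) T, ‖g t‖ ≤ Cg)
    (hCg' : ∀ t ∈ Set.Icc (0 : ℝ) T, ‖deriv g t‖ ≤ Cg')
    :
    (∀ n, ∀ t ∈ Set.Icc (0 : ℝ) T,
      |(∫ s in (0 : ℝ)..t, ∑ i, w s i * g s i) -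
        (∫ s in (0 : ℝ)..t, ∑ i, wn n s i * g s i)| ≤ δ n * (Cg + T * Cg') * Mt) ∧
    Tendsto (fun n => δ n * (Cg + T * Cg') * (Mt : ℝ)) atTop (nhds 0) := by
  have h0T : (0:ℝ) ∈ Set.Icc (0:ℝ) T := ⟨le_refl 0, hT.le⟩
  have hCg0 : 0 ≤ Cg := (norm_nonneg _).trans (hCg 0 h0T)
  have hCg'0 : 0 ≤ Cg' := (norm_nonneg _).trans (hCg' 0 h0T)
  constructor
  swap
  · have := hδ.mul_const ((Cg + T * Cg') * (Mt : ℝ))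
    simpa [mul_assoc] using this
  intro n t ht
  have ht0 : 0 ≤ t := ht.1
  have htT : t ≤ T := ht.2
  -- basic component facts
  have hwn01 : ∀ s ∈ Set.Icc (0:ℝ) T, ∀ i, wn n s i ∈ Set.Icc (0:ℝ) 1 := by
    intro s hs i
    have h := hwn_mem n s hs i
    simp only [Set.mem_insert_iff, Set.mem_singleton_iff] at h
    rcases h with h | h <;> simp [Set.mem_Icc, h]
  have hgc : ∀ i : Fin Mt, Continuous fun s => g s i := fun i =>
    (continuous_apply i).comp hg.continuous
  have hφc : ∀ i : Fin Mt, Continuous fun s => deriv g s i := fun i =>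
    (continuous_apply i).comp (hg.continuous_deriv le_rfl)
  have hgd : ∀ (i : Fin Mt) (s : ℝ), HasDerivAt (fun u => g u i) (deriv g s i) s := by
    intro i s
    exact (ContinuousLinearMap.proj (R := ℝ) (φ := fun _ : Fin Mt => ℝ)
      i).hasFDerivAt.comp_hasDerivAt s ((hg.differentiable one_ne_zero s).hasDerivAt)
  have hdm : ∀ i : Fin Mt, Measurable fun s => w s i - wn n s i := fun i =>
    ((measurable_pi_apply i).comp hw_meas).sub ((measurable_pi_apply i).comp (hwn_meas n))
  have hdb : ∀ i : Fin Mt, ∀ s ∈ Set.Icc (0:ℝ) T, |w s i - wn n s i| ≤ 2 := by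
    intro i s hs
    have h1 := hw_mem s hs i
    have h2 := hwn01 s hs i
    rw [abs_le]
    constructor <;> [linarith [h1.1, h2.2]; linarith [h1.2, h2.1]]
  -- the accumulated deviation, componentwise
  have hvint : ∀ r ∈ Set.Icc (0:ℝ) T, IntervalIntegrable (fun s => w s - wn n s) volume 0 r := by
    intro r hr
    rw [intervalIntegrable_iff_integrableOn_Ioc_of_le hr.1]
    apply Measure.integrableOn_of_bounded measure_Ioc_lt_top.ne
      (hw_meas.sub (hwn_meas n)).aestronglyMeasurable (M := 2)
    filter_upwards [ae_restrict_mem measurableSet_Ioc] with x hx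
    have hxT : x ∈ Set.Icc (0:ℝ) T := ⟨hx.1.le, hx.2.trans hr.2⟩
    rw [pi_norm_le_iff_of_nonneg (by norm_num)]
    intro i
    simpa using hdb i x hxT
  have hG : ∀ (i : Fin Mt), ∀ r ∈ Set.Icc (0:ℝ) T,
      |∫ s in (0:ℝ)..r, (w s i - wn n s i)| ≤ δ n := by
    intro i r hr
    have hcomp := (ContinuousLinearMap.proj (R := ℝ) (φ := fun _ : Fin Mt => ℝ)
      i).intervalIntegral_comp_comm (hvint r hr)
    have : (∫ s in (0:ℝ)..r, (w s i - wn n s i))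
        = (∫ s in (0:ℝ)..r, (w s - wn n s)) i := by
      simpa using hcomp
    rw [this]
    calc |(∫ s in (0:ℝ)..r, (w s - wn n s)) i|
        ≤ ‖∫ s in (0:ℝ)..r, (w s - wn n s)‖ :=
          norm_le_pi_norm (∫ s in (0:ℝ)..r, (w s - wn n s)) i
      _ ≤ δ n := hdev n r hr
  -- interval integrability of products
  have hIccsub : Set.Ioc (0:ℝ) t ⊆ Set.Icc (0:ℝ) T := fun x hx => ⟨hx.1.le, hx.2.trans htT⟩
  have hdgint : ∀ i : Fin Mt,
      IntervalIntegrable (fun s => (w s i - wn n s i) * g s i) volume 0 t := by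
    intro i
    rw [intervalIntegrable_iff_integrableOn_Ioc_of_le ht0]
    apply bddIntOn (C := 2 * Cg) ((hdm i).mul (hgc i).measurable)
    intro x hx
    rw [Pi.mul_apply, abs_mul]
    exact mul_le_mul (hdb i x (hIccsub hx))
      ((norm_le_pi_norm (g x) i).trans (hCg x (hIccsub hx))) (abs_nonneg _) (by norm_num)
  have hwi : ∀ i : Fin Mt, IntervalIntegrable (fun s => w s i * g s i) volume 0 t := by
    intro i
    rw [intervalIntegrable_iff_integrableOn_Ioc_of_le ht0]
    apply bddIntOn (C := Cg) (((measurable_pi_apply i).comp hw_meas).mul (hgc i).measurable)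
    intro x hx
    rw [Pi.mul_apply, abs_mul]
    have h1 := hw_mem x (hIccsub hx) i
    calc |w x i| * |g x i| ≤ 1 * Cg := by
          exact mul_le_mul (abs_le.2 ⟨by linarith [h1.1], h1.2⟩)
            ((norm_le_pi_norm (g x) i).trans (hCg x (hIccsub hx))) (abs_nonneg _) one_pos.le
      _ = Cg := one_mul Cg
  have hwint : IntervalIntegrable (fun s => ∑ i, w s i * g s i) volume 0 t := by
    have h := IntervalIntegrable.sum (f := fun i s => w s i * g s i) Finset.univ
      (fun i _ => hwi i)
    rwa [Finset.sum_fn] at h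
  have hwni : ∀ i : Fin Mt, IntervalIntegrable (fun s => wn n s i * g s i) volume 0 t := by
    intro i
    rw [intervalIntegrable_iff_integrableOn_Ioc_of_le ht0]
    apply bddIntOn (C := Cg) (((measurable_pi_apply i).comp (hwn_meas n)).mul (hgc i).measurable)
    intro x hx
    rw [Pi.mul_apply, abs_mul]
    have h1 := hwn01 x (hIccsub hx) i
    calc |wn n x i| * |g x i| ≤ 1 * Cg := by
          exact mul_le_mul (abs_le.2 ⟨by linarith [h1.1], h1.2⟩)
            ((norm_le_pi_norm (g x) i).trans (hCg x (hIccsub hx))) (abs_nonneg _) one_pos.le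
      _ = Cg := one_mul Cg
  have hwnint : IntervalIntegrable (fun s => ∑ i, wn n s i * g s i) volume 0 t := by
    have h := IntervalIntegrable.sum (f := fun i s => wn n s i * g s i) Finset.univ
      (fun i _ => hwni i)
    rwa [Finset.sum_fn] at h
  -- the difference as a sum of coordinate integrals
  have hdiff : (∫ s in (0:ℝ)..t, ∑ i, w s i * g s i) -
      (∫ s in (0:ℝ)..t, ∑ i, wn n s i * g s i)
      = ∑ i, ∫ s in (0:ℝ)..t, (w s i - wn n s i) * g s i := by
    rw [← intervalIntegral.integral_sub hwint hwnint, ← intervalIntegral.integral_finset_sum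
      (fun i _ => hdgint i)]
    congr 1
    funext s
    rw [← Finset.sum_sub_distrib]
    congr 1
    funext i
    ring
  rw [hdiff]
  -- per-coordinate integration by parts and estimate
  have hkey : ∀ i : Fin Mt,
      |∫ s in (0:ℝ)..t, (w s i - wn n s i) * g s i| ≤ δ n * (Cg + T * Cg') := by
    intro i
    set d : ℝ → ℝ := fun s => w s i - wn n s i with hd_def
    set G : ℝ → ℝ := fun r => ∫ s in (0:ℝ)..r, d s with hG_def
    set φ : ℝ → ℝ := fun r => deriv g r i with hφ_def
    have hftc : ∀ s : ℝ, (∫ r in s..t, φ r) = g t i - g s i := by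
      intro s
      exact intervalIntegral.integral_eq_sub_of_hasDerivAt (fun r _ => hgd i r)
        ((hφc i).intervalIntegrable s t)
    -- rewrite integrand
    have hrepr : ∀ s : ℝ, d s * g s i = d s * g t i - d s * (∫ r in s..t, φ r) := by
      intro s
      rw [hftc s]
      ring
    have hi1 : IntervalIntegrable (fun s => d s * g t i) volume 0 t := by
      rw [intervalIntegrable_iff_integrableOn_Ioc_of_le ht0]
      apply bddIntOn (C := 2 * |g t i|) ((hdm i).mul_const _)
      intro x hx
      rw [abs_mul]
      exact mul_le_mul_of_nonneg_right (hdb i x (hIccsub hx)) (abs_nonneg _)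
    have hi2 : IntervalIntegrable (fun s => d s * (∫ r in s..t, φ r)) volume 0 t := by
      rw [intervalIntegrable_iff_integrableOn_Ioc_of_le ht0]
      apply bddIntOn (C := 2 * (2 * Cg))
        ((hdm i).mul (by
          simp_rw [hftc]
          exact (continuous_const.sub (hgc i)).measurable))
      intro x hx
      simp only [Pi.mul_apply]
      rw [abs_mul, hftc x]
      apply mul_le_mul (hdb i x (hIccsub hx)) _ (abs_nonneg _) (by norm_num)
      calc |g t i - g x i| ≤ |g t i| + |g x i| := abs_sub _ _
        _ ≤ Cg + Cg := add_le_add ((norm_le_pi_norm (g t) i).trans (hCg t ht))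
            ((norm_le_pi_norm (g x) i).trans (hCg x (hIccsub hx)))
        _ = 2 * Cg := by ring
    have hibp : (∫ s in (0:ℝ)..t, d s * g s i)
        = G t * g t i - ∫ r in (0:ℝ)..t, G r * φ r := by
      calc ∫ s in (0:ℝ)..t, d s * g s i
          = ∫ s in (0:ℝ)..t, (d s * g t i - d s * (∫ r in s..t, φ r)) := by
            congr 1; funext s; exact hrepr s
        _ = (∫ s in (0:ℝ)..t, d s * g t i) - ∫ s in (0:ℝ)..t, d s * (∫ r in s..t, φ r) :=
            intervalIntegral.integral_sub hi1 hi2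
        _ = G t * g t i - ∫ r in (0:ℝ)..t, G r * φ r := by
            rw [fubini_swap ht0 (hdm i) (fun s hs => hdb i s (hIccsub hs)) (hφc i),
              intervalIntegral.integral_mul_const]
    rw [show (fun s => (w s i - wn n s i) * g s i) = fun s => d s * g s i from rfl, hibp]
    have hGt : |G t| ≤ δ n := hG i t ht
    have hterm2 : |∫ r in (0:ℝ)..t, G r * φ r| ≤ δ n * Cg' * T := by
      have hb : ∀ x ∈ Set.uIoc (0:ℝ) t, ‖G x * φ x‖ ≤ δ n * Cg' := by
        intro x hx
        rw [Set.uIoc_of_le ht0] at hx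
        rw [Real.norm_eq_abs, abs_mul]
        exact mul_le_mul (hG i x (hIccsub hx))
          ((norm_le_pi_norm (deriv g x) i).trans (hCg' x (hIccsub hx))) (abs_nonneg _)
          (hδ_nonneg n)
      calc |∫ r in (0:ℝ)..t, G r * φ r| ≤ δ n * Cg' * |t - 0| :=
            intervalIntegral.norm_integral_le_of_norm_le_const hb
        _ ≤ δ n * Cg' * T := by
            apply mul_le_mul_of_nonneg_left _ (mul_nonneg (hδ_nonneg n) hCg'0)
            rw [sub_zero, abs_of_nonneg ht0]; exact htT
    calc |G t * g t i - ∫ r in (0:ℝ)..t, G r * φ r|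
        ≤ |G t * g t i| + |∫ r in (0:ℝ)..t, G r * φ r| := abs_sub _ _
      _ ≤ δ n * Cg + δ n * Cg' * T := by
          apply add_le_add _ hterm2
          rw [abs_mul]
          exact mul_le_mul hGt ((norm_le_pi_norm (g t) i).trans (hCg t ht)) (abs_nonneg _)
            (hδ_nonneg n)
      _ = δ n * (Cg + T * Cg') := by ring
  calc |∑ i, ∫ s in (0:ℝ)..t, (w s i - wn n s i) * g s i|
      ≤ ∑ i, |∫ s in (0:ℝ)..t, (w s i - wn n s i) * g s i| := Finset.abs_sum_le_sum_abs _ _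
    _ ≤ ∑ _i : Fin Mt, δ n * (Cg + T * Cg') := Finset.sum_le_sum fun i _ => hkey i
    _ = δ n * (Cg + T * Cg') * Mt := by
        rw [Finset.sum_const, Finset.card_univ, Fintype.card_fin, nsmul_eq_mul]; ring
end

section
/- Let v: [0,T] → {0,1} be piecewise constant with switching times 0 < s₁ < s₂ < ... < s_m < T (i.e., v is constant on each interval between consecutive switching times and changes value at each sᵢ). If consecutive switching times satisfy s_{i+1} − s_i ≥ τ_min for all i, and additionally s₁ ≥ 0, then for every t ∈ (0, T − τ_min), the total variation of v on the open interval (t, t + τ_min) is at most 1, and consequently the dwell-time inequality v(t + τ_min) − v(t) + Var(v; (t, t + τ_min)) ≤ 2 holds for all t ∈ (0, T − τ_min). -/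
lemma step_mono (p c : ℝ) (hc0 : 0 ≤ c) (hc1 : c ≤ 1) :
    Monotone (fun x : ℝ => if x < p then (0:ℝ) else if x = p then c else 1) := by
  intro x y hxy
  dsimp only
  rcases lt_trichotomy x p with hx | hx | hx
  · rw [if_pos hx]
    split_ifs <;> linarith
  · subst hx
    rw [if_neg (lt_irrefl x), if_pos rfl]
    split_ifs <;> linarith
  · have hy : p < y := lt_of_lt_of_le hx hxy
    rw [if_neg (not_lt.mpr hx.le), if_neg hx.ne', if_neg (not_lt.mpr hy.le), if_neg hy.ne']

lemma evar_one_sub (f : ℝ → ℝ) (S : Set ℝ) :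
    eVariationOn (fun x => 1 - f x) S = eVariationOn f S := by
  dsimp only [eVariationOn]
  congr 1 with p : 1
  congr 1 with i : 1
  rw [edist_dist, edist_dist, Real.dist_eq, Real.dist_eq]
  rw [show (1 - f (p.2.1 (i+1))) - (1 - f (p.2.1 i)) = -(f (p.2.1 (i+1)) - f (p.2.1 i)) by ring,
    abs_neg]

lemma window_var_core (v : ℝ → ℝ) (t τ p : ℝ) (hτ : 0 < τ) (hp : p ∈ Set.Ioo t (t + τ))
    (hc0 : 0 ≤ v p) (hc1 : v p ≤ 1)
    (ha : ∀ x ∈ Set.Ioo t (t + τ), x < p → v x = 0)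
    (hb : ∀ x ∈ Set.Ioo t (t + τ), p < x → v x = 1) :
    eVariationOn v (Set.Ioo t (t + τ)) ≤ 1 := by
  set g : ℝ → ℝ := fun x => if x < p then (0:ℝ) else if x = p then v p else 1 with hg
  have heq : Set.EqOn v g (Set.Ioo t (t + τ)) := by
    intro x hx
    rcases lt_trichotomy x p with h | h | h
    · rw [ha x hx h, hg]; simp [h]
    · subst h; simp [hg]
    · rw [hb x hx h, hg]; simp [not_lt.mpr h.le, h.ne']
  rw [eVariationOn.eq_of_eqOn heq]
  have hsub : Set.Ioo t (t + τ) ⊆ Set.Icc t (t + τ) ∩ Set.Icc t (t + τ) := by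
    intro x hx; exact ⟨⟨hx.1.le, hx.2.le⟩, ⟨hx.1.le, hx.2.le⟩⟩
  calc eVariationOn g (Set.Ioo t (t + τ))
      ≤ eVariationOn g (Set.Icc t (t + τ) ∩ Set.Icc t (t + τ)) := eVariationOn.mono g hsub
    _ ≤ ENNReal.ofReal (g (t + τ) - g t) := by
        exact MonotoneOn.eVariationOn_le ((step_mono p (v p) hc0 hc1).monotoneOn _)
          (Set.left_mem_Icc.mpr (by linarith)) (Set.right_mem_Icc.mpr (by linarith))
    _ ≤ 1 := by
        have h1 : g (t + τ) = 1 := by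
          simp [hg, not_lt.mpr hp.2.le, hp.2.ne']
        have h2 : g t = 0 := by simp [hg, hp.1]
        rw [h1, h2]
        simp

lemma window_var (v : ℝ → ℝ) (t τ p : ℝ) (hτ : 0 < τ) (hp : p ∈ Set.Ioo t (t + τ))
    (a b : ℝ) (ha01 : a = 0 ∨ a = 1) (hb01 : b = 0 ∨ b = 1) (hab : a ≠ b)
    (hc01 : v p = 0 ∨ v p = 1)
    (ha : ∀ x ∈ Set.Ioo t (t + τ), x < p → v x = a)
    (hb : ∀ x ∈ Set.Ioo t (t + τ), p < x → v x = b) :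
    eVariationOn v (Set.Ioo t (t + τ)) ≤ 1 := by
  have hc0 : 0 ≤ v p := by rcases hc01 with h | h <;> rw [h] <;> norm_num
  have hc1 : v p ≤ 1 := by rcases hc01 with h | h <;> rw [h] <;> norm_num
  rcases ha01 with rfl | rfl <;> rcases hb01 with rfl | rfl
  · exact absurd rfl hab
  · exact window_var_core v t τ p hτ hp hc0 hc1 ha hb
  · rw [← evar_one_sub v (Set.Ioo t (t + τ))]
    exact window_var_core (fun x => 1 - v x) t τ p hτ hp (by simp; linarith)
      (by simp; linarith)
      (fun x hx hxp => by simp [ha x hx hxp]) (fun x hx hxp => by simp [hb x hx hxp])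
  · exact absurd rfl hab


/-- converse direction of the dwell-time characterization: if the switching
times of a piecewise constant binary control are at least τ_min apart, then every window
of length τ_min contains variation at most 1 and the dwell-time inequality (8) holds. -/
theorem stmt_19 (T τmin : ℝ) (hT : 0 < T) (hτ : 0 < τmin) (hτT : τmin < T)
    (v : ℝ → ℝ) (hval : ∀ t ∈ Set.Icc (0 : ℝ) T, v t ∈ ({0, 1} : Set ℝ))
    (m : ℕ) (s : ℕ → ℝ)
    (hs0 : s 0 = 0) (hsend : s (m + 1) = T)
    (hmono : ∀ i ≤ m, s i < s (i + 1))
    (hgap : ∀ i, 1 ≤ i → i < m → s (i + 1) - s i ≥ τmin)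
    (hconst : ∀ i ≤ m, ∀ x ∈ Set.Ioo (s i) (s (i + 1)), ∀ y ∈ Set.Ioo (s i) (s (i + 1)),
      v x = v y)
    (hswitch : ∀ i, 1 ≤ i → i ≤ m →
      ∀ x ∈ Set.Ioo (s (i - 1)) (s i), ∀ y ∈ Set.Ioo (s i) (s (i + 1)), v x ≠ v y) :
    ∀ t ∈ Set.Ioo (0 : ℝ) (T - τmin),
      (eVariationOn v (Set.Ioo t (t + τmin))).toReal ≤ 1 ∧
      v (t + τmin) - v t + (eVariationOn v (Set.Ioo t (t + τmin))).toReal ≤ 2 := by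
  intro t ht
  obtain ⟨ht0, htT⟩ := ht
  -- values of v in {0,1} transformed
  have hval' : ∀ x, 0 ≤ x → x ≤ T → v x = 0 ∨ v x = 1 := by
    intro x h1 h2
    have := hval x ⟨h1, h2⟩
    simpa using this
  -- variation bound
  have hvar : (eVariationOn v (Set.Ioo t (t + τmin))).toReal ≤ 1 := by
    have hmain : eVariationOn v (Set.Ioo t (t + τmin)) ≤ 1 := by
      by_cases hA : ∃ j, 1 ≤ j ∧ j ≤ m ∧ s j ∈ Set.Ioo t (t + τmin)
      · -- exactly one switch in the window
        obtain ⟨j, hj1, hjm, hjW⟩ := hA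
        have hjj : s (j - 1 + 1) = s j := by rw [Nat.sub_add_cancel hj1]
        -- left endpoint of the rest interval below t
        have hleft : s (j - 1) ≤ t := by
          by_contra hc
          push_neg at hc
          have h1 : 1 ≤ j - 1 := by
            rcases Nat.eq_or_lt_of_le hj1 with h | h
            · exfalso; rw [← h] at hc; simp [hs0] at hc; linarith
            · omega
          have hgap' := hgap (j - 1) h1 (by omega)
          rw [hjj] at hgap'
          have : s (j - 1) < s j := by rw [← hjj]; exact hmono (j-1) (by omega)
          have hjW2 := hjW.2
          linarith
        -- right endpoint of the next interval above t + τmin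
        have hright : t + τmin ≤ s (j + 1) := by
          rcases Nat.eq_or_lt_of_le hjm with h | h
          · rw [h, hsend]; linarith
          · by_contra hc
            push_neg at hc
            have hgap' := hgap j hj1 (by omega)
            have hjW1 := hjW.1
            linarith
        -- sample points on each side
        set p := s j with hp
        set x₀ := (t + p) / 2 with hx₀
        set y₀ := (p + (t + τmin)) / 2 with hy₀
        obtain ⟨hpl, hpr⟩ := hjW
        have hx₀W : x₀ ∈ Set.Ioo t (t + τmin) := ⟨by simp only [hx₀]; linarith,
          by simp only [hx₀]; linarith⟩
        have hy₀W : y₀ ∈ Set.Ioo t (t + τmin) := ⟨by simp only [hy₀]; linarith,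
          by simp only [hy₀]; linarith⟩
        have hx₀L : x₀ ∈ Set.Ioo (s (j - 1)) (s j) :=
          ⟨lt_of_le_of_lt hleft hx₀W.1, by simp only [hx₀]; linarith⟩
        have hy₀R : y₀ ∈ Set.Ioo (s j) (s (j + 1)) :=
          ⟨by simp only [hy₀]; linarith, lt_of_lt_of_le hy₀W.2 hright⟩
        have hab : v x₀ ≠ v y₀ := hswitch j hj1 hjm x₀ hx₀L y₀ hy₀R
        have ha01 : v x₀ = 0 ∨ v x₀ = 1 := hval' x₀ (by linarith [hx₀W.1]) (by linarith [hx₀W.2])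
        have hb01 : v y₀ = 0 ∨ v y₀ = 1 := hval' y₀ (by linarith [hy₀W.1]) (by linarith [hy₀W.2])
        have hc01 : v p = 0 ∨ v p = 1 := hval' p (by linarith) (by linarith)
        have ha : ∀ x ∈ Set.Ioo t (t + τmin), x < p → v x = v x₀ := by
          intro x hx hxp
          exact hconst (j - 1) (by omega) x ⟨lt_of_le_of_lt hleft hx.1, by rw [hjj]; exact hxp⟩
            x₀ ⟨hx₀L.1, by rw [hjj]; exact hx₀L.2⟩
        have hb : ∀ x ∈ Set.Ioo t (t + τmin), p < x → v x = v y₀ := by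
          intro x hx hxp
          exact hconst j hjm x ⟨hxp, lt_of_lt_of_le hx.2 hright⟩ y₀ hy₀R
        exact window_var v t τmin p hτ ⟨hpl, hpr⟩ (v x₀) (v y₀) ha01 hb01 hab hc01 ha hb
      · -- no switch in the window: v is constant there
        push_neg at hA
        -- the largest index i ≤ m with s i ≤ t
        set i := Nat.findGreatest (fun k => s k ≤ t) m with hi
        have him : i ≤ m := Nat.findGreatest_le m
        have hit : s i ≤ t := by
          have : (fun k => s k ≤ t) i := Nat.findGreatest_spec (P := fun k => s k ≤ t)
            (Nat.zero_le m) (by show s 0 ≤ t; rw [hs0]; linarith)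
          exact this
        have hnext : t + τmin ≤ s (i + 1) := by
          rcases Nat.eq_or_lt_of_le him with h | h
          · rw [h, hsend]; linarith
          · have hgt : t < s (i + 1) := by
              by_contra hc
              push_neg at hc
              exact absurd hc (Nat.findGreatest_is_greatest (P := fun k => s k ≤ t) (by rw [← hi]; omega) (by omega))
            have := hA (i + 1) (by omega) (by omega)
            simp only [Set.mem_Ioo, not_and, not_lt] at this
            exact this hgt
        have hsubs : Set.Ioo t (t + τmin) ⊆ Set.Ioo (s i) (s (i + 1)) := by
          intro x hx
          exact ⟨lt_of_le_of_lt hit hx.1, lt_of_lt_of_le hx.2 hnext⟩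
        have hconst' : (v '' Set.Ioo t (t + τmin)).Subsingleton := by
          rintro _ ⟨x, hx, rfl⟩ _ ⟨y, hy, rfl⟩
          exact hconst i him x (hsubs hx) y (hsubs hy)
        rw [eVariationOn.constant_on hconst']
        exact zero_le
    have := ENNReal.toReal_mono (b := 1) (by simp) hmain
    simpa using this
  refine ⟨hvar, ?_⟩
  have h1 := hval' t ht0.le (by linarith)
  have h2 := hval' (t + τmin) (by linarith) (by linarith)
  rcases h1 with h1 | h1 <;> rcases h2 with h2 | h2 <;> rw [h1, h2] <;> linarith
end
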